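/- Let Λ be a commutative Noetherian domain and x ∈ Λ a nonzero nonunit such that the quotient ring Ω = Λ/xΛ is again a domain. Let M be a finitely generated Λ-module admitting a finite free resolution 0 → Λ^{n_d} → ⋯ → Λ^{n_0} → M → 0. Then M/xM is a torsion Ω-module if and only if M[x] is a torsion Ω-module and M is a torsion Λ-module. -/

import Mathlib

open Pointwise

/-- A finite free resolution `0 → Λ^{n d} → ⋯ → Λ^{n 0} → M → 0` of length `d`:
the ranks are given by `n : ℕ → ℕ` which vanishes above `d`, the maps
`f i : Λ^{n (i+1)} → Λ^{n i}` together with the augmentation `g : Λ^{n 0} → M`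
form an exact sequence (exactness at every `Λ^{n i}` and surjectivity onto `M`;
since `n i = 0` for `i > d`, exactness at `Λ^{n d}` says the last map is injective). -/
structure FiniteFreeResolution (Λ : Type*) [CommRing Λ]
    (M : Type*) [AddCommGroup M] [Module Λ M] (d : ℕ) (n : ℕ → ℕ) : Type _ where
  bounded : ∀ i, d < i → n i = 0
  f : ∀ i : ℕ, (Fin (n (i + 1)) → Λ) →ₗ[Λ] (Fin (n i) → Λ)
  g : (Fin (n 0) → Λ) →ₗ[Λ] M
  surj : Function.Surjective g
  exact_zero : LinearMap.range (f 0) = LinearMap.ker g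
  exact : ∀ i : ℕ, LinearMap.range (f (i + 1)) = LinearMap.ker (f i)

/-- Let `Λ` be a commutative Noetherian domain, `x ∈ Λ` a nonzero nonunit such that
`Ω = Λ/xΛ` is again a domain, and let `M` be a finitely generated `Λ`-module admitting a
finite free resolution. Then `M/xM` is a torsion `Ω`-module if and only if `M[x]` is a
torsion `Ω`-module and `M` is a torsion `Λ`-module. -/
theorem mod_isTorsion_iff_torsionBy_isTorsion_and_isTorsion
    (Λ : Type*) [CommRing Λ] [IsDomain Λ] [IsNoetherianRing Λ]
    (x : Λ) (hx0 : x ≠ 0) (hxu : ¬IsUnit x)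
    [IsDomain (Λ ⧸ Ideal.span ({x} : Set Λ))]
    (M : Type*) [AddCommGroup M] [Module Λ M] [Module.Finite Λ M]
    (d : ℕ) (n : ℕ → ℕ) (res : FiniteFreeResolution Λ M d n) :
    Module.IsTorsion (Λ ⧸ Ideal.span ({x} : Set Λ)) (M ⧸ x • (⊤ : Submodule Λ M)) ↔
      Module.IsTorsion (Λ ⧸ Ideal.span ({x} : Set Λ)) (Submodule.torsionBy Λ M x) ∧
        Module.IsTorsion Λ M := by
  set I : Ideal Λ := Ideal.span ({x} : Set Λ) with hI
  set mk : Λ →+* (Λ ⧸ I) := Ideal.Quotient.mk I with hmk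
  constructor
  · intro h
    -- get, for each m, a ν killing it modulo xM
    have key : ∀ m : M, ∃ ν : Λ, mk ν ≠ 0 ∧ ν • m ∈ x • (⊤ : Submodule Λ M) := by
      intro m
      obtain ⟨ω, hω⟩ := @h (Submodule.Quotient.mk m)
      obtain ⟨ν, hν⟩ := Ideal.Quotient.mk_surjective (ω : Λ ⧸ I)
      refine ⟨ν, by rw [hν]; exact nonZeroDivisors.ne_zero ω.2, ?_⟩
      rw [← Submodule.Quotient.mk_eq_zero]
      rw [Submonoid.smul_def, ← hν] at hω
      exact hω
    choose ν hν1 hν2 using key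
    obtain ⟨s, hs⟩ := Module.Finite.fg_top (R := Λ) (M := M)
    set c₀ : Λ := ∏ i ∈ s, ν i with hc₀
    have hc₀0 : mk c₀ ≠ 0 := by
      rw [hc₀, map_prod]
      exact Finset.prod_ne_zero_iff.2 fun i _ => hν1 i
    have hc₀M : ∀ m : M, c₀ • m ∈ x • (⊤ : Submodule Λ M) := by
      classical
      have hsub : Submodule.span Λ (s : Set M) ≤
          (x • (⊤ : Submodule Λ M)).comap (LinearMap.lsmul Λ M c₀) := by
        rw [Submodule.span_le]
        intro i hi
        simp only [SetLike.mem_coe, Submodule.mem_comap, LinearMap.lsmul_apply]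
        rw [hc₀, ← Finset.mul_prod_erase s ν (Finset.mem_coe.mp hi), mul_comm, mul_smul]
        exact Submodule.smul_mem _ _ (hν2 i)
      intro m
      have hm : m ∈ Submodule.span Λ (s : Set M) := by rw [hs]; trivial
      exact hsub hm
    -- Cayley–Hamilton
    set φ : Module.End Λ M := c₀ • (LinearMap.id : M →ₗ[Λ] M) with hφ
    have hrange : LinearMap.range φ ≤ I • (⊤ : Submodule Λ M) := by
      rintro _ ⟨m, rfl⟩
      rw [hI, Submodule.ideal_span_singleton_smul]
      exact hc₀M m
    obtain ⟨p, hpm, -, hpc, hp0⟩ :=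
      LinearMap.exists_monic_and_coeff_mem_pow_and_aeval_eq_zero_of_range_le_smul Λ φ I hrange
    set c : Λ := p.eval c₀ with hc
    have hφalg : φ = algebraMap Λ (Module.End Λ M) c₀ := by
      ext m; simp [hφ, Module.algebraMap_end_apply]
    have hckill : ∀ m : M, c • m = 0 := by
      intro m
      have := congrFun (congrArg DFunLike.coe hp0) m
      rw [hφalg, Polynomial.aeval_algebraMap_apply] at this
      simpa [Module.algebraMap_end_apply, hc, Polynomial.aeval_def,
        Polynomial.eval₂_eq_eval_map, Polynomial.map_id] using this
    have hmapp : p.map mk = Polynomial.X ^ p.natDegree := by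
      ext k
      rw [Polynomial.coeff_map, Polynomial.coeff_X_pow]
      rcases lt_trichotomy k p.natDegree with hk | hk | hk
      · have : p.coeff k ∈ I := by
          have := hpc k
          exact Ideal.pow_le_self (Nat.sub_ne_zero_of_lt hk) this
        rw [if_neg hk.ne, hmk, Ideal.Quotient.eq_zero_iff_mem]
        exact this
      · rw [if_pos hk, hk, hpm.coeff_natDegree, map_one]
      · rw [if_neg hk.ne', Polynomial.coeff_eq_zero_of_natDegree_lt hk, map_zero]
    have hcne : mk c ≠ 0 := by
      have : mk c = (mk c₀) ^ p.natDegree := by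
        rw [hc, ← Polynomial.eval₂_at_apply, ← Polynomial.eval_map, hmapp]
        simp
      rw [this]
      exact pow_ne_zero _ hc₀0
    constructor
    · intro t
      refine ⟨⟨mk c, mem_nonZeroDivisors_of_ne_zero hcne⟩, ?_⟩
      rw [Submonoid.smul_def]
      have : (mk c : Λ ⧸ I) • t = c • t := Submodule.torsionBy.mk_ideal_smul x c t
      rw [this]
      ext
      simpa using hckill (t : M)
    · intro m
      have hc0 : c ≠ 0 := fun h => hcne (by rw [h, map_zero])
      exact ⟨⟨c, mem_nonZeroDivisors_of_ne_zero hc0⟩, hckill m⟩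
  · rintro ⟨htb, ht⟩
    have back : ∀ (k : ℕ) (μ : Λ) (m : M), mk μ ≠ 0 → (x ^ k * μ) • m = 0 →
        ∃ ν : Λ, mk ν ≠ 0 ∧ ν • m ∈ x • (⊤ : Submodule Λ M) := by
      intro k
      induction k with
      | zero =>
        intro μ m hμ hm
        rw [pow_zero, one_mul] at hm
        exact ⟨μ, hμ, by rw [hm]; exact zero_mem _⟩
      | succ k ih =>
        intro μ m hμ hm
        have htx : x • ((x ^ k * μ) • m) = 0 := by
          rw [smul_smul, show x * (x ^ k * μ) = x ^ (k + 1) * μ by ring]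
          exact hm
        have hmemt : (x ^ k * μ) • m ∈ Submodule.torsionBy Λ M x :=
          (Submodule.mem_torsionBy_iff _ _).mpr htx
        obtain ⟨ω, hω⟩ := @htb ⟨(x ^ k * μ) • m, hmemt⟩
        obtain ⟨ρ, hρ⟩ := Ideal.Quotient.mk_surjective (ω : Λ ⧸ I)
        have hρ0 : mk ρ ≠ 0 := by rw [hρ]; exact nonZeroDivisors.ne_zero ω.2
        rw [Submonoid.smul_def, ← hρ] at hω
        have hω' : ρ • ((x ^ k * μ) • m) = 0 := by
          have := Submodule.torsionBy.mk_ideal_smul x ρ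
            ⟨(x ^ k * μ) • m, hmemt⟩
          rw [this] at hω
          exact congrArg Subtype.val hω
        have hkill : (x ^ k * (ρ * μ)) • m = 0 := by
          rw [show x ^ k * (ρ * μ) = ρ * (x ^ k * μ) by ring, mul_smul]
          exact hω'
        exact ih (ρ * μ) m (by rw [map_mul]; exact mul_ne_zero hρ0 hμ) hkill
    intro z
    obtain ⟨m, rfl⟩ := Submodule.Quotient.mk_surjective _ z
    obtain ⟨a, ha⟩ := @ht m
    have ha0 : (a : Λ) ≠ 0 := nonZeroDivisors.ne_zero a.2
    obtain ⟨k, μ, hμdvd, hfac⟩ := WfDvdMonoid.max_power_factor' ha0 hxu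
    have hμ0 : mk μ ≠ 0 := by
      rw [hmk, Ne, Ideal.Quotient.eq_zero_iff_mem, hI, Ideal.mem_span_singleton]
      exact hμdvd
    have hm0 : (x ^ k * μ) • m = 0 := by
      rw [← hfac]
      exact ha
    obtain ⟨ν, hν0, hνm⟩ := back k μ m hμ0 hm0
    refine ⟨⟨mk ν, mem_nonZeroDivisors_of_ne_zero hν0⟩, ?_⟩
    rw [Submonoid.smul_def]
    show (mk ν : Λ ⧸ I) • Submodule.Quotient.mk m = 0
    have : (mk ν : Λ ⧸ I) • (Submodule.Quotient.mk m : M ⧸ x • (⊤ : Submodule Λ M)) =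
        Submodule.Quotient.mk (ν • m) := rfl
    rw [this, Submodule.Quotient.mk_eq_zero]
    exact hνm
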